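/- Let (S, R, E, F) be a solution of Model (2) on [0,∞) with nonnegative initial values. Then S(t) ≥ 0, R(t) ≥ 0, E(t) ≥ 0 and F(t) ≥ 0 for all t ≥ 0. -/

import Mathlib

/-- Grönwall-type sign lemma: if `y' t ≥ g t * y t` for `t ≥ 0` with `g` continuous
and `y 0 ≥ 0`, then `y` stays nonnegative on `[0, ∞)`. -/
lemma model2_nonneg_aux (y g : ℝ → ℝ) (hy : Differentiable ℝ y) (hg : Continuous g)
    (h0 : 0 ≤ y 0) (hd : ∀ t ≥ (0:ℝ), g t * y t ≤ deriv y t) :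
    ∀ t ≥ (0:ℝ), 0 ≤ y t := by
  set G : ℝ → ℝ := fun t => ∫ s in (0:ℝ)..t, g s with hGdef
  have hG : ∀ t : ℝ, HasDerivAt G (g t) t := fun t =>
    intervalIntegral.integral_hasDerivAt_right (hg.intervalIntegrable 0 t)
      (hg.stronglyMeasurable.stronglyMeasurableAtFilter) hg.continuousAt
  set h : ℝ → ℝ := fun t => y t * Real.exp (-G t) with hhdef
  have hh : ∀ t : ℝ, HasDerivAt h ((deriv y t - g t * y t) * Real.exp (-G t)) t := by
    intro t
    have h1 : HasDerivAt y (deriv y t) t := (hy t).hasDerivAt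
    have h2 : HasDerivAt (fun s => Real.exp (-G s)) (Real.exp (-G t) * (-g t)) t :=
      (hG t).neg.exp
    have : HasDerivAt (fun s => y s * Real.exp (-G s)) _ t := h1.mul h2
    convert this using 1
    ring
  have hhd : Differentiable ℝ h := fun t => (hh t).differentiableAt
  have hmono : MonotoneOn h (Set.Ici (0:ℝ)) := by
    apply monotoneOn_of_deriv_nonneg (convex_Ici 0) hhd.continuous.continuousOn
      (hhd.differentiableOn)
    intro t ht
    rw [interior_Ici] at ht
    rw [(hh t).deriv]
    exact mul_nonneg (sub_nonneg.mpr (hd t ht.le)) (Real.exp_pos _).le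
  intro t ht
  have h0' : h 0 = y 0 := by
    simp [hhdef, hGdef]
  have := hmono (Set.self_mem_Ici) (Set.mem_Ici.mpr ht) ht
  rw [h0'] at this
  have hpos : 0 < Real.exp (-G t) := Real.exp_pos _
  have h2 : 0 ≤ y t * Real.exp (-G t) := le_trans h0 this
  nlinarith

/-- Nonnegativity part of Proposition 2: a solution of Model (2) on [0,∞)
with nonnegative initial values stays nonnegative. -/
theorem model2_nonneg
    (k1 k2 k3 m1 m2 r μ α c η a1 a2 a3 p : ℝ) (l : ℕ)
    (hk1 : 0 ≤ k1) (hk2 : 0 ≤ k2) (hk3 : 0 ≤ k3) (hm1 : 0 ≤ m1) (hm2 : 0 ≤ m2)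
    (hr : 0 ≤ r) (hμ : 0 ≤ μ) (hα : 0 ≤ α) (hc : 0 ≤ c) (hη : 0 ≤ η)
    (ha1 : 0 < a1) (ha2 : 0 < a2) (ha3 : 0 < a3) (hp0 : 0 < p) (hp1 : p ≤ 1)
    (hl : 1 ≤ l)
    (S R E F : ℝ → ℝ)
    (hS : Differentiable ℝ S) (hR : Differentiable ℝ R)
    (hE : Differentiable ℝ E) (hF : Differentiable ℝ F)
    (hS' : ∀ t ≥ (0:ℝ), deriv S t =
      (k1 * E t / (a1 + E t)) * S t * (1 - m1 * (S t + η * R t))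
        - (c * a2 ^ l / (a2 ^ l + E t ^ l)) * S t
        - (c * a3 ^ l / (a3 ^ l + E t ^ l)) * S t)
    (hR' : ∀ t ≥ (0:ℝ), deriv R t =
      k3 * R t * (1 - m1 * (S t + η * R t))
        + (c * a3 ^ l / (a3 ^ l + E t ^ l)) * S t)
    (hE' : ∀ t ≥ (0:ℝ), deriv E t = p * r * F t - μ * E t)
    (hF' : ∀ t ≥ (0:ℝ), deriv F t = k2 * F t * (1 - m2 * F t) - α * (S t + R t) * F t)
    (hS0 : 0 ≤ S 0) (hR0 : 0 ≤ R 0) (hE0 : 0 ≤ E 0) (hF0 : 0 ≤ F 0) :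
    ∀ t ≥ (0:ℝ), 0 ≤ S t ∧ 0 ≤ R t ∧ 0 ≤ E t ∧ 0 ≤ F t := by
  -- Step 1: F ≥ 0
  have hFnn : ∀ t ≥ (0:ℝ), 0 ≤ F t := by
    apply model2_nonneg_aux F (fun t => k2 * (1 - m2 * F t) - α * (S t + R t)) hF
      (by have := hF.continuous; have := hS.continuous; have := hR.continuous; fun_prop) hF0
    intro t ht
    rw [hF' t ht]
    apply le_of_eq
    ring
  -- Step 2: E ≥ 0
  have hEnn : ∀ t ≥ (0:ℝ), 0 ≤ E t := by
    apply model2_nonneg_aux E (fun _ => -μ) hE continuous_const hE0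
    intro t ht
    rw [hE' t ht]
    have : 0 ≤ p * r * F t := mul_nonneg (mul_nonneg hp0.le hr) (hFnn t ht)
    nlinarith
  -- A continuous extension of E which is nonnegative everywhere
  set Et : ℝ → ℝ := fun t => E (max t 0) with hEtdef
  have hEtc : Continuous Et := hE.continuous.comp (continuous_id.max continuous_const)
  have hEtnn : ∀ t, 0 ≤ Et t := fun t => hEnn _ (le_max_right _ _)
  have hEteq : ∀ t ≥ (0:ℝ), Et t = E t := fun t ht => by simp [hEtdef, max_eq_left ht]
  have hden1 : ∀ t, (0:ℝ) < a1 + Et t := fun t => by have := hEtnn t; linarith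
  have hden2 : ∀ t, (0:ℝ) < a2 ^ l + Et t ^ l := fun t => by
    have := pow_nonneg (hEtnn t) l; have := pow_pos ha2 l; linarith
  have hden3 : ∀ t, (0:ℝ) < a3 ^ l + Et t ^ l := fun t => by
    have := pow_nonneg (hEtnn t) l; have := pow_pos ha3 l; linarith
  -- Step 3: S ≥ 0
  have hSnn : ∀ t ≥ (0:ℝ), 0 ≤ S t := by
    apply model2_nonneg_aux S (fun t =>
      (k1 * Et t / (a1 + Et t)) * (1 - m1 * (S t + η * R t))
        - c * a2 ^ l / (a2 ^ l + Et t ^ l)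
        - c * a3 ^ l / (a3 ^ l + Et t ^ l)) hS ?_ hS0 ?_
    · apply Continuous.sub
      apply Continuous.sub
      · exact ((continuous_const.mul hEtc).div (continuous_const.add hEtc)
          (fun t => (hden1 t).ne')).mul (by have := hS.continuous; have := hR.continuous; fun_prop)
      · exact continuous_const.div (continuous_const.add (hEtc.pow l))
          (fun t => (hden2 t).ne')
      · exact continuous_const.div (continuous_const.add (hEtc.pow l))
          (fun t => (hden3 t).ne')
    · intro t ht
      rw [hS' t ht]
      simp only [hEtdef]
      rw [show max t 0 = t from max_eq_left ht]
      apply le_of_eq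
      ring
  -- Step 4: R ≥ 0
  have hRnn : ∀ t ≥ (0:ℝ), 0 ≤ R t := by
    apply model2_nonneg_aux R (fun t => k3 * (1 - m1 * (S t + η * R t))) hR
      (by have := hS.continuous; have := hR.continuous; fun_prop) hR0
    intro t ht
    rw [hR' t ht]
    have h1 : 0 ≤ c * a3 ^ l / (a3 ^ l + E t ^ l) * S t := by
      apply mul_nonneg _ (hSnn t ht)
      apply div_nonneg (by positivity)
      have := hEnn t ht
      positivity
    nlinarith
  exact fun t ht => ⟨hSnn t ht, hRnn t ht, hEnn t ht, hFnn t ht⟩
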